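/- Consider the secular frequencies of the planetary problem in partially reduced Deprit variables: the eigenvalues s = (s₁,…,s_N) of the horizontal quadratic form Q*_h and z = (z₁,…,z_{N−1}) of the vertical quadratic form Q*_v. Then Σ_{i=1}^N s_i + Σ_{i=1}^{N−1} z_i = 0 (Herman's resonance): equivalently tr(F*_h) + tr(F*_v) = 0, where F*_h, F*_v are the matrices of Q*_h, Q*_v. This follows from tr(F*_v) = tr(F_v) (equality of the traces of the reduced and unreduced vertical forms) combined with the known relation tr(F_h) + tr(F_v) = 0 for the Poincaré–Delaunay forms. -/

import Mathlib

noncomputable def Lsum (Λ : ℕ → ℝ) (j : ℕ) : ℝ := ∑ k ∈ Finset.Icc 1 j, Λ k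

noncomputable def ccoef (Λ : ℕ → ℝ) (j : ℕ) : ℝ :=
  if j = 1 then -Real.sqrt (Λ 2 / (Λ 1 * Lsum Λ 2))
  else Real.sqrt (Lsum Λ (j - 1) / (Lsum Λ j * Λ j))

noncomputable def ctcoef (Λ : ℕ → ℝ) (j : ℕ) : ℝ :=
  if j = 1 then ccoef Λ 1
  else -Real.sqrt (Λ (j + 1) / (Lsum Λ (j + 1) * Lsum Λ j))

/-- The `N × (N-1)` matrix `ℓ` of the linear operator `𝔏`, with `1`-based indices. -/
noncomputable def ellMat (Λ : ℕ → ℝ) (i k : ℕ) : ℝ :=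
  if k + 1 = i then ccoef Λ i else if i ≤ k then ctcoef Λ k else 0

section aux

variable (N : ℕ) (Λ : ℕ → ℝ)

lemma Lsum_pos (hΛ : ∀ i, 1 ≤ i → i ≤ N → 0 < Λ i)
    (j : ℕ) (h1 : 1 ≤ j) (h2 : j ≤ N) : 0 < Lsum Λ j := by
  unfold Lsum
  apply Finset.sum_pos
  · intro k hk
    rw [Finset.mem_Icc] at hk
    exact hΛ k hk.1 (le_trans hk.2 h2)
  · exact ⟨1, Finset.mem_Icc.2 ⟨le_refl 1, h1⟩⟩

lemma Lsum_succ (j : ℕ) : Lsum Λ (j + 1) = Lsum Λ j + Λ (j + 1) := by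
  unfold Lsum
  rw [Finset.sum_Icc_succ_top (by omega)]

lemma Lsum_one : Lsum Λ 1 = Λ 1 := by simp [Lsum]

variable (hΛ : ∀ i, 1 ≤ i → i ≤ N → 0 < Λ i)

lemma ctcoef_sq (hΛ : ∀ i, 1 ≤ i → i ≤ N → 0 < Λ i) (k : ℕ) (hk : 2 ≤ k) (hkN : k + 1 ≤ N) :
    ctcoef Λ k ^ 2 = 1 / Lsum Λ k - 1 / Lsum Λ (k + 1) := by
  have hLk : 0 < Lsum Λ k := Lsum_pos N Λ hΛ k (by omega) (by omega)
  have hLk1 : 0 < Lsum Λ (k + 1) := Lsum_pos N Λ hΛ (k + 1) (by omega) hkN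
  have hsucc : Lsum Λ (k + 1) = Lsum Λ k + Λ (k + 1) := Lsum_succ Λ k
  have hnn : 0 ≤ Λ (k + 1) / (Lsum Λ (k + 1) * Lsum Λ k) := by
    have := hΛ (k + 1) (by omega) hkN
    positivity
  rw [ctcoef, if_neg (by omega), neg_pow, Real.sq_sqrt hnn]
  field_simp
  rw [hsucc]; ring

lemma ctcoef_one_sq (hΛ : ∀ i, 1 ≤ i → i ≤ N → 0 < Λ i) (hN : 2 ≤ N) :
    ctcoef Λ 1 ^ 2 = 1 / Λ 1 - 1 / Lsum Λ 2 := by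
  have h1 : 0 < Λ 1 := hΛ 1 le_rfl (by omega)
  have h2 : 0 < Λ 2 := hΛ 2 (by omega) hN
  have hL2 : 0 < Lsum Λ 2 := Lsum_pos N Λ hΛ 2 (by omega) hN
  have hsucc : Lsum Λ 2 = Λ 1 + Λ 2 := by
    have := Lsum_succ Λ 1; rw [Lsum_one] at this; exact this
  have hnn : 0 ≤ Λ 2 / (Λ 1 * Lsum Λ 2) := by positivity
  rw [ctcoef, if_pos rfl, ccoef, if_pos rfl, neg_pow, Real.sq_sqrt hnn]
  field_simp
  rw [hsucc]; ring

lemma ccoef_sq (hΛ : ∀ i, 1 ≤ i → i ≤ N → 0 < Λ i) (j : ℕ) (hj : 2 ≤ j) (hjN : j ≤ N) :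
    ccoef Λ j ^ 2 = 1 / Λ j - 1 / Lsum Λ j := by
  have hj1 : 0 < Λ j := hΛ j (by omega) hjN
  have hLj : 0 < Lsum Λ j := Lsum_pos N Λ hΛ j (by omega) hjN
  have hLj1 : 0 < Lsum Λ (j - 1) := Lsum_pos N Λ hΛ (j - 1) (by omega) (by omega)
  have hsucc : Lsum Λ j = Lsum Λ (j - 1) + Λ j := by
    have := Lsum_succ Λ (j - 1)
    rw [show j - 1 + 1 = j by omega] at this
    exact this
  have hnn : 0 ≤ Lsum Λ (j - 1) / (Lsum Λ j * Λ j) := by positivity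
  rw [ccoef, if_neg (by omega), Real.sq_sqrt hnn]
  field_simp
  rw [hsucc]; ring

lemma cross (hΛ : ∀ i, 1 ≤ i → i ≤ N → 0 < Λ i) (j : ℕ) (hj : 2 ≤ j) (hjN : j ≤ N) :
    ccoef Λ j * ctcoef Λ (j - 1) = -(1 / Lsum Λ j) := by
  have hj1 : 0 < Λ j := hΛ j (by omega) hjN
  have hLj : 0 < Lsum Λ j := Lsum_pos N Λ hΛ j (by omega) hjN
  have hLj1 : 0 < Lsum Λ (j - 1) := Lsum_pos N Λ hΛ (j - 1) (by omega) (by omega)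
  rcases eq_or_lt_of_le hj with h2 | h3
  · -- j = 2
    subst h2
    have h1 : 0 < Λ 1 := hΛ 1 le_rfl (by omega)
    rw [ccoef, if_neg (by omega), show (2:ℕ) - 1 = 1 from rfl, ctcoef, if_pos rfl,
      ccoef, if_pos rfl, Lsum_one, mul_neg, ← Real.sqrt_mul (by positivity)]
    have harg : Λ 1 / (Lsum Λ 2 * Λ 2) * (Λ 2 / (Λ 1 * Lsum Λ 2)) = (1 / Lsum Λ 2) ^ 2 := by
      field_simp
    rw [harg, Real.sqrt_sq (by positivity)]
  · -- j ≥ 3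
    have hj3 : 3 ≤ j := h3
    rw [ccoef, if_neg (by omega), ctcoef, if_neg (by omega),
      show j - 1 + 1 = j by omega, mul_neg, ← Real.sqrt_mul (by positivity)]
    have harg : Lsum Λ (j - 1) / (Lsum Λ j * Λ j) * (Λ j / (Lsum Λ j * Lsum Λ (j - 1)))
        = (1 / Lsum Λ j) ^ 2 := by
      field_simp
    rw [harg, Real.sqrt_sq (by positivity)]

lemma tele (hΛ : ∀ i, 1 ≤ i → i ≤ N → 0 < Λ i) (m : ℕ) (hm : 2 ≤ m) (n : ℕ) (hmn : m ≤ n) (hnN : n ≤ N) :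
    ∑ k ∈ Finset.Icc m (n - 1), ctcoef Λ k ^ 2 = 1 / Lsum Λ m - 1 / Lsum Λ n := by
  induction n, hmn using Nat.le_induction with
  | base => rw [Finset.Icc_eq_empty (by omega)]; simp
  | succ n hmn ih =>
    specialize ih (by omega)
    rw [show n + 1 - 1 = n by omega,
      show (Finset.Icc m n) = Finset.Icc m (n - 1 + 1) by congr 1; omega,
      Finset.sum_Icc_succ_top (by omega), show n - 1 + 1 = n by omega,
      ih, ctcoef_sq N Λ hΛ n (by omega) hnN]
    ring

lemma Mlem_le (hΛ : ∀ i, 1 ≤ i → i ≤ N → 0 < Λ i) (hN : 2 ≤ N) (i j : ℕ) (hi1 : 1 ≤ i) (hij : i ≤ j) (hjN : j ≤ N) :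
    ∑ k ∈ Finset.Icc 1 (N - 1), ellMat Λ i k * ellMat Λ j k
      = (if i = j then 1 / Λ i else 0) - 1 / Lsum Λ N := by
  rcases eq_or_lt_of_le (show 1 ≤ j by omega) with hj1 | hj2
  · -- j = 1, hence i = 1
    have hi : i = 1 := by omega
    subst hi
    rw [← hj1, if_pos rfl]
    have hterm : ∀ k ∈ Finset.Icc 1 (N - 1),
        ellMat Λ 1 k * ellMat Λ 1 k = ctcoef Λ k ^ 2 := by
      intro k hk
      rw [Finset.mem_Icc] at hk
      rw [ellMat, if_neg (by omega), if_pos hk.1]; ring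
    rw [Finset.sum_congr rfl hterm,
      Finset.Icc_eq_cons_Ioc (by omega : 1 ≤ N - 1), Finset.sum_cons,
      ← Finset.Icc_add_one_left_eq_Ioc,
      show (1:ℕ) + 1 = 2 from rfl,
      show N - 1 = N - 1 by rfl]
    have htail : ∑ k ∈ Finset.Icc 2 (N - 1), ctcoef Λ k ^ 2
        = 1 / Lsum Λ 2 - 1 / Lsum Λ N := tele N Λ hΛ 2 le_rfl N hN le_rfl
    rw [htail, ctcoef_one_sq N Λ hΛ hN]
    ring
  · -- j ≥ 2
    have hj2' : 2 ≤ j := hj2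
    have hsub : Finset.Icc (j - 1) (N - 1) ⊆ Finset.Icc 1 (N - 1) := by
      apply Finset.Icc_subset_Icc_left; omega
    have hvanish : ∀ k ∈ Finset.Icc 1 (N - 1), k ∉ Finset.Icc (j - 1) (N - 1) →
        ellMat Λ i k * ellMat Λ j k = 0 := by
      intro k hk hk'
      rw [Finset.mem_Icc] at hk
      rw [Finset.mem_Icc] at hk'
      have hklt : k < j - 1 := by omega
      rw [ellMat, show ellMat Λ j k = 0 by rw [ellMat, if_neg (by omega), if_neg (by omega)]]
      ring
    rw [← Finset.sum_subset hsub hvanish,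
      Finset.Icc_eq_cons_Ioc (by omega : j - 1 ≤ N - 1), Finset.sum_cons]
    have hIoc : Finset.Ioc (j - 1) (N - 1) = Finset.Icc j (N - 1) := by
      rw [← Finset.Icc_add_one_left_eq_Ioc]; congr 1; omega
    have htail : ∑ k ∈ Finset.Ioc (j - 1) (N - 1), ellMat Λ i k * ellMat Λ j k
        = 1 / Lsum Λ j - 1 / Lsum Λ N := by
      rw [hIoc]
      have hterm : ∀ k ∈ Finset.Icc j (N - 1),
          ellMat Λ i k * ellMat Λ j k = ctcoef Λ k ^ 2 := by
        intro k hk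
        rw [Finset.mem_Icc] at hk
        rw [ellMat, if_neg (by omega), if_pos (by omega),
          ellMat, if_neg (by omega), if_pos (by omega)]
        ring
      rw [Finset.sum_congr rfl hterm]
      exact tele N Λ hΛ j hj2' N (by omega) le_rfl
    rw [htail]
    have hj' : ellMat Λ j (j - 1) = ccoef Λ j := by
      rw [ellMat, if_pos (by omega)]
    rcases eq_or_lt_of_le hij with heq | hlt
    · subst heq
      rw [if_pos rfl, hj', ← sq]
      have hc := ccoef_sq N Λ hΛ i hj2' hjN
      linarith
    · rw [if_neg (by omega), hj',
        show ellMat Λ i (j - 1) = ctcoef Λ (j - 1) by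
          rw [ellMat, if_neg (by omega), if_pos (by omega)]]
      rw [mul_comm (ctcoef Λ (j - 1))]
      have hc := cross N Λ hΛ j hj2' hjN
      linarith

lemma Mlem (hΛ : ∀ i, 1 ≤ i → i ≤ N → 0 < Λ i) (hN : 2 ≤ N) (i j : ℕ) (hi1 : 1 ≤ i) (hiN : i ≤ N)
    (hj1 : 1 ≤ j) (hjN : j ≤ N) :
    ∑ k ∈ Finset.Icc 1 (N - 1), ellMat Λ i k * ellMat Λ j k
      = (if i = j then 1 / Λ i else 0) - 1 / Lsum Λ N := by
  rcases le_or_gt i j with h | h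
  · exact Mlem_le N Λ hΛ hN i j hi1 h hjN
  · have := Mlem_le N Λ hΛ hN j i hj1 (le_of_lt h) hiN
    calc ∑ k ∈ Finset.Icc 1 (N - 1), ellMat Λ i k * ellMat Λ j k
        = ∑ k ∈ Finset.Icc 1 (N - 1), ellMat Λ j k * ellMat Λ i k := by
          apply Finset.sum_congr rfl; intros; ring
      _ = (if j = i then 1 / Λ j else 0) - 1 / Lsum Λ N := this
      _ = (if i = j then 1 / Λ i else 0) - 1 / Lsum Λ N := by
          rw [if_neg (by omega), if_neg (by omega)]

end aux

theorem stmt_18 (N : ℕ) (hN : 2 ≤ N) (Λ : ℕ → ℝ)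
    (hΛ : ∀ i, 1 ≤ i → i ≤ N → 0 < Λ i)
    (Fh Fv : ℕ → ℕ → ℝ)
    (hsym : ∀ i j, 1 ≤ i → i ≤ N → 1 ≤ j → j ≤ N → Fv i j = Fv j i)
    (hrow : ∀ i, 1 ≤ i → i ≤ N → ∑ j ∈ Finset.Icc 1 N, Fv i j = 0)
    (htr : ∑ i ∈ Finset.Icc 1 N, Fh i i + ∑ i ∈ Finset.Icc 1 N, Fv i i / Λ i = 0) :
    ∑ i ∈ Finset.Icc 1 N,
        ((if i = 1 then (-1 : ℝ) else 1) * Fh i i * (if i = 1 then (-1 : ℝ) else 1))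
      + ∑ k ∈ Finset.Icc 1 (N - 1), ∑ i ∈ Finset.Icc 1 N, ∑ j ∈ Finset.Icc 1 N,
          ellMat Λ i k * Fv i j * ellMat Λ j k = 0 := by
  have h1 : ∑ i ∈ Finset.Icc 1 N,
      ((if i = 1 then (-1 : ℝ) else 1) * Fh i i * (if i = 1 then (-1 : ℝ) else 1))
      = ∑ i ∈ Finset.Icc 1 N, Fh i i := by
    apply Finset.sum_congr rfl
    intro i _
    split <;> ring
  have h2 : ∑ k ∈ Finset.Icc 1 (N - 1), ∑ i ∈ Finset.Icc 1 N, ∑ j ∈ Finset.Icc 1 N,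
      ellMat Λ i k * Fv i j * ellMat Λ j k
      = ∑ i ∈ Finset.Icc 1 N, Fv i i / Λ i := by
    rw [Finset.sum_comm]
    have step1 : ∀ i ∈ Finset.Icc 1 N,
        ∑ k ∈ Finset.Icc 1 (N - 1), ∑ j ∈ Finset.Icc 1 N,
          ellMat Λ i k * Fv i j * ellMat Λ j k
        = ∑ j ∈ Finset.Icc 1 N, Fv i j *
            ∑ k ∈ Finset.Icc 1 (N - 1), ellMat Λ i k * ellMat Λ j k := by
      intro i _
      rw [Finset.sum_comm]
      apply Finset.sum_congr rfl
      intro j _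
      rw [Finset.mul_sum]
      apply Finset.sum_congr rfl
      intro k _
      ring
    rw [Finset.sum_congr rfl step1]
    apply Finset.sum_congr rfl
    intro i hi
    rw [Finset.mem_Icc] at hi
    have hM : ∀ j ∈ Finset.Icc 1 N,
        Fv i j * ∑ k ∈ Finset.Icc 1 (N - 1), ellMat Λ i k * ellMat Λ j k
        = Fv i j * ((if i = j then 1 / Λ i else 0) - 1 / Lsum Λ N) := by
      intro j hj
      rw [Finset.mem_Icc] at hj
      rw [Mlem N Λ hΛ hN i j hi.1 hi.2 hj.1 hj.2]
    rw [Finset.sum_congr rfl hM]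
    have : ∑ j ∈ Finset.Icc 1 N,
        Fv i j * ((if i = j then 1 / Λ i else 0) - 1 / Lsum Λ N)
        = (∑ j ∈ Finset.Icc 1 N, Fv i j * (if i = j then 1 / Λ i else 0))
          - (∑ j ∈ Finset.Icc 1 N, Fv i j) * (1 / Lsum Λ N) := by
      rw [Finset.sum_mul, ← Finset.sum_sub_distrib]
      apply Finset.sum_congr rfl
      intro j _
      ring
    rw [this, hrow i hi.1 hi.2, zero_mul, sub_zero]
    rw [Finset.sum_eq_single i]
    · rw [if_pos rfl]; ring
    · intro j _ hji
      rw [if_neg (fun h => hji h.symm), mul_zero]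
    · intro h
      exact absurd (Finset.mem_Icc.2 ⟨hi.1, hi.2⟩) h
  rw [h1, h2]
  exact htr
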